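/- For directed spaces X and Y, a function f : X → Y is topologically continuous if and only if it is directed continuous (monotone and preserving all directed limits). -/

import Mathlib

open Set

/-- The specialization order on a topological space: `x ⊑ y` iff `x ∈ closure {y}`. -/
def sOrd (X : Type*) [TopologicalSpace X] (x y : X) : Prop := x ∈ closure {y}

/-- A directed subset `D`, viewed as a net indexed by itself, converges to `x`:
it is eventually in every open neighborhood of `x`. -/
def dconv (X : Type*) [TopologicalSpace X] (D : Set X) (x : X) : Prop :=
  D.Nonempty ∧ DirectedOn (sOrd X) D ∧
    ∀ U : Set X, IsOpen U → x ∈ U → ∃ d ∈ D, ∀ e ∈ D, sOrd X d e → e ∈ U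

/-- A subset `U` is directed open if every directed net converging to a point of `U`
meets `U`. -/
def dOpen (X : Type*) [TopologicalSpace X] (U : Set X) : Prop :=
  ∀ D x, dconv X D x → x ∈ U → (D ∩ U).Nonempty

lemma sOrd_refl {X : Type*} [TopologicalSpace X] (x : X) : sOrd X x x :=
  subset_closure rfl

lemma sOrd_upper {X : Type*} [TopologicalSpace X] {U : Set X} (hU : IsOpen U)
    {x y : X} (hx : x ∈ U) (h : sOrd X x y) : y ∈ U := by
  rcases (mem_closure_iff.mp h) U hU hx with ⟨z, hz1, hz2⟩
  cases hz2; exact hz1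

lemma sOrd_mono {X Y : Type*} [TopologicalSpace X] [TopologicalSpace Y]
    {f : X → Y} (hf : Continuous f) {x y : X} (h : sOrd X x y) :
    sOrd Y (f x) (f y) := by
  have : f x ∈ f '' closure {y} := mem_image_of_mem f h
  have h2 := image_closure_subset_closure_image (s := {y}) hf this
  simpa [image_singleton, sOrd] using h2

/-- For directed spaces `X` and `Y`, a function `f : X → Y` is
topologically continuous iff it is directed continuous (monotone and preserving
all directed limits). -/
theorem stmt_7 {X Y : Type*} [TopologicalSpace X] [TopologicalSpace Y]
    [T0Space X] [T0Space Y]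
    (hX : ∀ U : Set X, dOpen X U ↔ IsOpen U)
    (hY : ∀ U : Set Y, dOpen Y U ↔ IsOpen U) (f : X → Y) :
    Continuous f ↔
      ((∀ x y : X, sOrd X x y → sOrd Y (f x) (f y)) ∧
        (∀ (D : Set X) (x : X), dconv X D x → dconv Y (f '' D) (f x))) := by
  constructor
  · intro hf
    refine ⟨fun x y h => sOrd_mono hf h, fun D x hD => ?_⟩
    obtain ⟨hne, hdir, hconv⟩ := hD
    refine ⟨hne.image f, ?_, ?_⟩
    · rintro - ⟨a, ha, rfl⟩ - ⟨b, hb, rfl⟩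
      obtain ⟨c, hc, hac, hbc⟩ := hdir a ha b hb
      exact ⟨f c, mem_image_of_mem f hc, sOrd_mono hf hac, sOrd_mono hf hbc⟩
    · intro U hU hxU
      obtain ⟨d, hd, hdtail⟩ := hconv (f ⁻¹' U) (hU.preimage hf) hxU
      have hdU : f d ∈ U := hdtail d hd (sOrd_refl d)
      refine ⟨f d, mem_image_of_mem f hd, ?_⟩
      rintro - ⟨e, he, rfl⟩ hle
      exact sOrd_upper hU hdU hle
  · rintro ⟨hmono, hlim⟩
    rw [continuous_def]
    intro U hU
    rw [← hX]
    intro D x hD hxU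
    have hconvY := hlim D x hD
    obtain ⟨y, ⟨d, hd, rfl⟩, hyU⟩ := (hY U).mpr hU (f '' D) (f x) hconvY hxU
    exact ⟨d, hd, hyU⟩
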